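/- Let U, V be subspaces of E with dim U ≤ dim V and U ∩ V⊥ = 0. Then the shadow S := P_V(U) of U on V satisfies U⊥ ∩ S = 0; consequently there is a unique linear map M : U → U⊥ (the slope of the pair (U,V)) such that S = { u + M u : u ∈ U }. -/

import Mathlib

open Module Submodule

noncomputable section

variable {E : Type*} [NormedAddCommGroup E] [InnerProductSpace ℝ E] [FiniteDimensional ℝ E]

/-- The orthogonal projection onto a subspace `U`, viewed as a continuous linear
endomorphism of `E`. -/
noncomputable def projCLM (U : Submodule ℝ E) : E →L[ℝ] E :=
  U.subtypeL.comp (orthogonalProjection U)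

/-- The gap `δ(U,V) := ‖P_U - P_V ∘ P_U‖` between two subspaces. -/
noncomputable def gap (U V : Submodule ℝ E) : ℝ :=
  ‖projCLM U - (projCLM V).comp (projCLM U)‖

lemma projCLM_apply (U : Submodule ℝ E) (x : E) :
    projCLM U x = (orthogonalProjection U x : E) := rfl

lemma projCLM_mem (U : Submodule ℝ E) (x : E) : projCLM U x ∈ U := by
  rw [projCLM_apply]; exact (orthogonalProjection U x).2

lemma sub_projCLM_mem (U : Submodule ℝ E) (x : E) : x - projCLM U x ∈ Uᗮ :=
  U.sub_starProjection_mem_orthogonal x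

/-- Let `U, V` be subspaces with `dim U ≤ dim V` and `U ∩ V⊥ = 0`.  Then the shadow
`S := P_V(U)` satisfies `U⊥ ∩ S = 0`, and there is a unique linear map `M : U → U⊥`
(the slope of the pair `(U,V)`) whose graph `{u + M u : u ∈ U}` equals `S`. -/
theorem exists_unique_slope (U V : Submodule ℝ E)
    (hdim : finrank ℝ U ≤ finrank ℝ V) (htrans : U ⊓ Vᗮ = ⊥) :
    Uᗮ ⊓ Submodule.map (projCLM V : E →ₗ[ℝ] E) U = ⊥ ∧
      ∃! M : ↥U →ₗ[ℝ] ↥Uᗮ,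
        Submodule.map (projCLM V : E →ₗ[ℝ] E) U = LinearMap.range (U.subtype + Uᗮ.subtype ∘ₗ M) := by
  set S : Submodule ℝ E := Submodule.map (projCLM V : E →ₗ[ℝ] E) U with hS
  -- first part
  have hfirst : Uᗮ ⊓ S = ⊥ := by
    rw [eq_bot_iff]
    rintro x ⟨hxU, u, huU, rfl⟩
    have hV : projCLM V u ∈ V := projCLM_mem V u
    have h1 : inner ℝ (projCLM V u) u = (0 : ℝ) := by
      rw [real_inner_comm]; exact (Submodule.mem_orthogonal _ _).1 hxU u huU
    have h2 : inner ℝ (projCLM V u) (u - projCLM V u) = (0 : ℝ) :=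
      (sub_projCLM_mem V u) _ hV
    have : inner ℝ (projCLM V u) (projCLM V u) = (0 : ℝ) := by
      have := inner_sub_right (𝕜 := ℝ) (projCLM V u) u (projCLM V u)
      rw [h1, h2] at this
      linarith
    have : projCLM V u = 0 := by
      rwa [inner_self_eq_zero] at this
    simp [this]
  refine ⟨hfirst, ?_⟩
  -- F : U → E, the restriction of P_V to U
  set F : ↥U →ₗ[ℝ] E := (projCLM V).toLinearMap ∘ₗ U.subtype with hF
  have hSrange : S = LinearMap.range F := by
    rw [hF, LinearMap.range_comp, Submodule.range_subtype]
  have hFinj : Function.Injective F := by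
    rw [← LinearMap.ker_eq_bot, eq_bot_iff]
    rintro ⟨u, huU⟩ hu
    have hu' : projCLM V u = 0 := hu
    have : u ∈ Vᗮ := by
      have := sub_projCLM_mem V u
      rwa [hu', sub_zero] at this
    have : u ∈ U ⊓ Vᗮ := ⟨huU, this⟩
    rw [htrans] at this
    exact Subtype.ext this
  have hdimS : finrank ℝ S = finrank ℝ U := by
    rw [hSrange]; exact LinearMap.finrank_range_of_inj hFinj
  -- G : S → U, restriction of P_U to S
  set G : ↥S →ₗ[ℝ] ↥U := (orthogonalProjection U).toLinearMap ∘ₗ S.subtype with hG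
  have hGinj : Function.Injective G := by
    rw [← LinearMap.ker_eq_bot, eq_bot_iff]
    rintro ⟨s, hsS⟩ hker
    have h0 : orthogonalProjection U s = 0 := hker
    have hsO : s ∈ Uᗮ := by
      have : s - ((orthogonalProjection U s : U) : E) ∈ Uᗮ := sub_projCLM_mem U s
      rwa [h0, Submodule.coe_zero, sub_zero] at this
    have : s ∈ Uᗮ ⊓ S := ⟨hsO, hsS⟩
    rw [hfirst] at this
    exact Subtype.ext this
  set e : ↥S ≃ₗ[ℝ] ↥U := G.linearEquivOfInjective hGinj hdimS with he
  have heap : ∀ s : ↥S, (e s : ↥U) = orthogonalProjection U (s : E) := fun s => rfl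
  -- the slope map
  have hmemO : ∀ u : ↥U, (S.subtype ∘ₗ e.symm.toLinearMap - U.subtype) u ∈ Uᗮ := by
    intro u
    have h1 : (orthogonalProjection U ((e.symm u : E)) : E) = (u : E) := by
      have := heap (e.symm u)
      rw [e.apply_symm_apply] at this
      exact congrArg _ this.symm
    have h2 : (e.symm u : E) - ((orthogonalProjection U (e.symm u : E) : U) : E) ∈ Uᗮ :=
      sub_projCLM_mem U (e.symm u : E)
    rw [h1] at h2
    exact h2
  set M : ↥U →ₗ[ℝ] ↥Uᗮ :=
    (S.subtype ∘ₗ e.symm.toLinearMap - U.subtype).codRestrict Uᗮ hmemO with hM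
  have hsum : U.subtype + Uᗮ.subtype ∘ₗ M = S.subtype ∘ₗ e.symm.toLinearMap := by
    ext u
    simp [hM, LinearMap.codRestrict]
  refine ⟨M, ?_, ?_⟩
  · show S = LinearMap.range (U.subtype + Uᗮ.subtype ∘ₗ M)
    rw [hsum, LinearMap.range_comp, LinearEquiv.range, Submodule.map_top,
      Submodule.range_subtype]
  · intro M' hM'
    ext u
    have hx : (u : E) + (M' u : E) ∈ S := by
      rw [hM']
      exact ⟨u, rfl⟩
    set x : ↥S := ⟨(u : E) + (M' u : E), hx⟩ with hxdef
    have hGx : G x = u := by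
      have : orthogonalProjection U ((u : E) + (M' u : E)) = u := by
        rw [map_add, orthogonalProjection_mem_subspace_eq_self,
          orthogonalProjection_mem_subspace_orthogonalComplement_eq_zero (M' u).2, add_zero]
      exact this
    have hex : e x = u := by
      rw [he]; rw [G.linearEquivOfInjective_apply]; exact hGx
    have hsymm : e.symm u = x := by rw [← hex, e.symm_apply_apply]
    have : (U.subtype + Uᗮ.subtype ∘ₗ M') u = (U.subtype + Uᗮ.subtype ∘ₗ M) u := by
      rw [hsum]
      simp only [LinearMap.add_apply, LinearMap.comp_apply, Submodule.coe_subtype,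
        LinearEquiv.coe_coe]
      exact congrArg Subtype.val hsymm.symm
    have h2 : (M' u : E) = (M u : E) := by
      simpa using this
    exact h2
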